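/- Let N be a prime and 1 ≤ d ≤ N, and let n = (n₁,…,n_d) and n′ = (n′₁,…,n′_d) be d-tuples of pairwise distinct elements of ℤ/Nℤ. Then there exists a unitary transformation U of ℂ^d with {φ_{m,n} : m ∈ ℤ/Nℤ} = {U·φ_{m,n′} : m ∈ ℤ/Nℤ} (equality of sets of vectors) if and only if there exists a unit u ∈ (ℤ/Nℤ)ˣ such that u·{n₁,…,n_d} = {n′₁,…,n′_d} as subsets of ℤ/Nℤ. In other words, unitary-equivalence classes of DFT-FUNTFs are in one-to-one correspondence with the orbits of the action of (ℤ/Nℤ)ˣ on d-element subsets of ℤ/Nℤ. -/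

import Mathlib

open scoped BigOperators ComplexConjugate

set_option linter.unusedSectionVars false

/-- The `m`-th vector of the DFT-FUNTF associated to the generators `n = (n₁,…,n_d)`:
its `k`-th coordinate is `(1/√d)·ω^(m·n_k)` where `ω = exp(2πi/N)`. -/
noncomputable def dftVec (N d : ℕ) (n : Fin d → ZMod N) (m : ZMod N) :
    EuclideanSpace ℂ (Fin d) :=
  WithLp.toLp 2 (fun k => ((1 / Real.sqrt d : ℝ) : ℂ) *
    Complex.exp (2 * Real.pi * Complex.I / N) ^ (m * n k).val)


section helpers

variable (N : ℕ) [NeZero N]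

noncomputable def ee (a : ZMod N) : ℂ :=
  Complex.exp (2 * Real.pi * Complex.I / N) ^ a.val

lemma hprim : IsPrimitiveRoot (Complex.exp (2 * Real.pi * Complex.I / N)) N :=
  Complex.isPrimitiveRoot_exp N (NeZero.ne N)

lemma omega_pow_N : Complex.exp (2 * Real.pi * Complex.I / N) ^ N = 1 :=
  (hprim N).pow_eq_one

lemma ee_add (a b : ZMod N) : ee N (a + b) = ee N a * ee N b := by
  unfold ee
  rw [← pow_add]
  have h : a.val + b.val = (a + b).val + N * ((a.val + b.val) / N) := by
    rw [ZMod.val_add]; exact (Nat.mod_add_div _ _).symm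
  rw [h, pow_add, pow_mul, omega_pow_N, one_pow, mul_one]

lemma ee_zero : ee N 0 = 1 := by simp [ee, ZMod.val_zero]

lemma ee_abs (a : ZMod N) : ‖ee N a‖ = 1 := by
  have h2 : 2 * (Real.pi:ℂ) * Complex.I / N = ((2*Real.pi/N : ℝ):ℂ) * Complex.I := by
    push_cast; ring
  have h : ‖(Complex.exp (2 * Real.pi * Complex.I / N))‖ = 1 := by
    rw [h2, Complex.norm_exp_ofReal_mul_I]
  simp [ee, norm_pow, h]

lemma ee_conj (a : ZMod N) : conj (ee N a) = ee N (-a) := by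
  rw [← Complex.inv_eq_conj (ee_abs N a)]
  exact inv_eq_of_mul_eq_one_right (by rw [← ee_add]; simp [ee_zero])

lemma vanish (hN : N.Prime) (c : ZMod N → ℤ)
    (h0 : ∑ j : ZMod N, c j = 0)
    (h : ∑ j : ZMod N, (c j : ℂ) * ee N j = 0) :
    ∀ j, c j = 0 := by
  have hNpos : 0 < N := hN.pos
  set ω : ℂ := Complex.exp (2 * Real.pi * Complex.I / N) with hω
  have hp : IsPrimitiveRoot ω N := hprim N
  -- all values equal c (-1)
  have key : ∀ j : ZMod N, c j = c (-1) := by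
    by_contra hcon
    push_neg at hcon
    obtain ⟨j0, hj0⟩ := hcon
    set P : Polynomial ℚ :=
      ∑ i ∈ Finset.range N, Polynomial.C ((c (i : ZMod N) : ℚ) - (c (-1) : ℚ)) * Polynomial.X ^ i
      with hP
    have hcoeff : ∀ i, i < N → P.coeff i = (c (i : ZMod N) : ℚ) - (c (-1) : ℚ) := by
      intro i hi
      rw [hP, Polynomial.finset_sum_coeff]
      rw [Finset.sum_eq_single i]
      · simp [sub_mul, Polynomial.coeff_sub, Polynomial.coeff_C_mul, Polynomial.coeff_X_pow]
      · intro t ht hti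
        simp [sub_mul, Polynomial.coeff_sub, Polynomial.coeff_C_mul, Polynomial.coeff_X_pow, Ne.symm hti]
      · intro hni
        exact absurd (Finset.mem_range.mpr hi) hni
    have hcoeff0 : ∀ i, N ≤ i → P.coeff i = 0 := by
      intro i hi
      rw [hP, Polynomial.finset_sum_coeff]
      apply Finset.sum_eq_zero
      intro t ht
      have : t ≠ i := by
        intro hti; subst hti; exact absurd hi (not_le.mpr (Finset.mem_range.mp ht))
      simp [sub_mul, Polynomial.coeff_sub, Polynomial.coeff_C_mul, Polynomial.coeff_X_pow, Ne.symm this]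
    have hPne : P ≠ 0 := by
      intro hP0
      apply hj0
      have hv := hcoeff j0.val j0.val_lt
      rw [hP0] at hv
      simp only [Polynomial.coeff_zero] at hv
      have hcast : ((j0.val : ℕ) : ZMod N) = j0 := ZMod.natCast_rightInverse j0
      rw [hcast] at hv
      have h2 : (c j0 : ℚ) = (c (-1) : ℚ) := sub_eq_zero.mp hv.symm
      exact_mod_cast h2
    -- degree bound
    have hdegle : P.natDegree ≤ N - 1 := by
      apply Polynomial.natDegree_le_iff_coeff_eq_zero.mpr
      intro m hm
      exact hcoeff0 m (by omega)
    have hcoefftop : P.coeff (N - 1) = 0 := by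
      rw [hcoeff (N - 1) (by omega)]
      have : ((N - 1 : ℕ) : ZMod N) = -1 := by
        have h1 : (1:ℕ) ≤ N := hNpos
        push_cast [Nat.cast_sub h1]
        simp
      rw [this, sub_self]
    have hdeglt : P.natDegree < N - 1 := by
      rcases lt_or_eq_of_le hdegle with h' | h'
      · exact h'
      · exfalso
        have := Polynomial.leadingCoeff_ne_zero.mpr hPne
        rw [Polynomial.leadingCoeff, h'] at this
        exact this hcoefftop
    -- evaluation at ω
    have hsum_reindex : ∑ i ∈ Finset.range N, ((c (i : ZMod N) : ℂ)) * ω ^ i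
        = ∑ j : ZMod N, (c j : ℂ) * ee N j := by
      refine Finset.sum_nbij' (i := fun i => ((i : ℕ) : ZMod N)) (j := fun j => j.val)
        ?_ ?_ ?_ ?_ ?_
      · intro a _; exact Finset.mem_univ _
      · intro a _; exact Finset.mem_range.mpr (ZMod.val_lt a)
      · intro a ha; exact ZMod.val_natCast_of_lt (Finset.mem_range.mp ha)
      · intro a _; exact ZMod.natCast_rightInverse a
      · intro a ha
        unfold ee
        rw [ZMod.val_natCast_of_lt (Finset.mem_range.mp ha)]
    have heval : Polynomial.aeval ω P = 0 := by
      rw [hP]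
      rw [map_sum]
      simp only [map_mul, Polynomial.aeval_C, map_pow, Polynomial.aeval_X]
      have expand : ∀ i ∈ Finset.range N,
          (algebraMap ℚ ℂ) ((c (i : ZMod N) : ℚ) - (c (-1) : ℚ)) * ω ^ i
          = (c (i : ZMod N) : ℂ) * ω ^ i - (c (-1) : ℂ) * ω ^ i := by
        intro i _
        rw [map_sub, map_intCast, map_intCast, sub_mul]
      rw [Finset.sum_congr rfl expand, Finset.sum_sub_distrib, hsum_reindex, h]
      rw [← Finset.mul_sum, hp.geom_sum_eq_zero hN.one_lt]
      simp
    -- minimal polynomial contradiction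
    have hmin : minpoly ℚ ω = Polynomial.cyclotomic N ℚ :=
      (Polynomial.cyclotomic_eq_minpoly_rat hp hNpos).symm
    have hdegmin : (minpoly ℚ ω).natDegree = N - 1 := by
      rw [hmin, Polynomial.natDegree_cyclotomic, Nat.totient_prime hN]
    have hle := minpoly.degree_le_of_ne_zero ℚ ω hPne heval
    have hle' : (minpoly ℚ ω).natDegree ≤ P.natDegree :=
      Polynomial.natDegree_le_natDegree hle
    omega
  -- conclude
  have hsum : ∑ j : ZMod N, c j = (N : ℤ) * c (-1) := by
    rw [Finset.sum_congr rfl (fun j _ => key j)]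
    rw [Finset.sum_const, Finset.card_univ, ZMod.card]
    simp [mul_comm]
  rw [hsum] at h0
  have hc1 : c (-1) = 0 := by
    have : (N : ℤ) ≠ 0 := Int.natCast_ne_zero.mpr (NeZero.ne N)
    exact (mul_eq_zero.mp h0).resolve_left this
  intro j
  rw [key j, hc1]

end helpers

lemma range_eq_of_sum_ee_eq {N d : ℕ} [NeZero N] (hN : N.Prime) (v w : Fin d → ZMod N)
    (h : ∑ k, ee N (v k) = ∑ k, ee N (w k)) : Set.range v = Set.range w := by
  classical
  set c : ZMod N → ℤ := fun j =>
    ((Finset.univ.filter (fun k => v k = j)).card : ℤ) -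
    ((Finset.univ.filter (fun k => w k = j)).card : ℤ) with hc
  have hfibC : ∀ x : Fin d → ZMod N,
      ∑ j : ZMod N, ((Finset.univ.filter (fun k => x k = j)).card : ℂ) * ee N j
        = ∑ k, ee N (x k) := by
    intro x
    rw [← Finset.sum_fiberwise' Finset.univ x (fun j => ee N j)]
    refine Finset.sum_congr rfl fun j _ => ?_
    rw [Finset.sum_const, nsmul_eq_mul]
  have hfibN : ∀ x : Fin d → ZMod N,
      ∑ j : ZMod N, ((Finset.univ.filter (fun k => x k = j)).card : ℤ) = d := by
    intro x
    have := Finset.sum_fiberwise' Finset.univ x (fun _ : ZMod N => (1 : ℤ))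
    simpa [Finset.sum_const] using this
  have h0 : ∑ j : ZMod N, c j = 0 := by
    simp only [hc, Finset.sum_sub_distrib, hfibN v, hfibN w, sub_self]
  have hωsum : ∑ j : ZMod N, (c j : ℂ) * ee N j = 0 := by
    simp only [hc]
    push_cast
    simp only [sub_mul, Finset.sum_sub_distrib, hfibC v, hfibC w]
    rw [h, sub_self]
  have hzero := vanish N hN c h0 hωsum
  have hcard : ∀ j, (Finset.univ.filter (fun k => v k = j)).card
      = (Finset.univ.filter (fun k => w k = j)).card := by
    intro j
    have := hzero j
    simp only [hc, sub_eq_zero] at this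
    exact_mod_cast this
  ext x
  simp only [Set.mem_range]
  constructor
  · rintro ⟨k, hk⟩
    have h1 : 0 < (Finset.univ.filter (fun k => v k = x)).card :=
      Finset.card_pos.mpr ⟨k, by simp [hk]⟩
    rw [hcard x] at h1
    obtain ⟨l, hl⟩ := Finset.card_pos.mp h1
    exact ⟨l, (Finset.mem_filter.mp hl).2⟩
  · rintro ⟨k, hk⟩
    have h1 : 0 < (Finset.univ.filter (fun k => w k = x)).card :=
      Finset.card_pos.mpr ⟨k, by simp [hk]⟩
    rw [← hcard x] at h1
    obtain ⟨l, hl⟩ := Finset.card_pos.mp h1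
    exact ⟨l, (Finset.mem_filter.mp hl).2⟩

lemma inner_dftVec {N d : ℕ} [NeZero N] (n : Fin d → ZMod N) (m m' : ZMod N) :
    (inner ℂ (dftVec N d n m) (dftVec N d n m') : ℂ)
      = (((1 / Real.sqrt d : ℝ) : ℂ)) ^ 2 * ∑ k, ee N ((m' - m) * n k) := by
  rw [PiLp.inner_apply]
  rw [Finset.mul_sum]
  refine Finset.sum_congr rfl fun k _ => ?_
  have h1 : dftVec N d n m k = ((1 / Real.sqrt d : ℝ) : ℂ) * ee N (m * n k) := rfl
  have h2 : dftVec N d n m' k = ((1 / Real.sqrt d : ℝ) : ℂ) * ee N (m' * n k) := rfl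
  rw [RCLike.inner_apply', h1, h2, map_mul, Complex.conj_ofReal, ee_conj,
    mul_mul_mul_comm, ← ee_add, ← sq]
  congr 2
  ring

lemma sum_ee_eq_of_inner_eq {N d : ℕ} [NeZero N] (hd : 1 ≤ d) (v w : Fin d → ZMod N)
    (m1 m2 m3 m4 : ZMod N)
    (h : (inner ℂ (dftVec N d v m1) (dftVec N d v m2) : ℂ)
      = inner ℂ (dftVec N d w m3) (dftVec N d w m4)) :
    ∑ k, ee N ((m2 - m1) * v k) = ∑ k, ee N ((m4 - m3) * w k) := by
  rw [inner_dftVec, inner_dftVec] at h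
  have hc : (((1 / Real.sqrt d : ℝ) : ℂ)) ^ 2 ≠ 0 := by
    apply pow_ne_zero
    simp only [Ne, Complex.ofReal_eq_zero]
    have hdpos : (0 : ℝ) < Real.sqrt d := Real.sqrt_pos.mpr (by exact_mod_cast hd)
    exact one_div_ne_zero hdpos.ne'
  exact mul_left_cancel₀ hc h

/-- For `N` prime, two DFT-FUNTFs are unitarily equivalent (as sets of vectors) iff
their sets of generators lie in the same orbit of the multiplication action of
`(ℤ/Nℤ)ˣ` on `d`-element subsets of `ℤ/Nℤ`. -/
theorem dft_funtf_unitary_equiv_iff_orbit (N d : ℕ) [NeZero N] (hN : N.Prime)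
    (hd : 1 ≤ d) (hdN : d ≤ N) (n n' : Fin d → ZMod N)
    (hn : Function.Injective n) (hn' : Function.Injective n') :
    (∃ U : EuclideanSpace ℂ (Fin d) ≃ₗᵢ[ℂ] EuclideanSpace ℂ (Fin d),
        Set.range (dftVec N d n) = Set.range (fun m => U (dftVec N d n' m))) ↔
      ∃ u : (ZMod N)ˣ,
        (fun x => (u : ZMod N) * x) '' Set.range n = Set.range n' := by
  haveI := Fact.mk hN
  constructor
  · rintro ⟨U, hU⟩
    have hmem : ∀ m : ZMod N, ∃ m'', U (dftVec N d n' m'') = dftVec N d n m := by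
      intro m
      have : dftVec N d n m ∈ Set.range (fun m => U (dftVec N d n' m)) := by
        rw [← hU]; exact ⟨m, rfl⟩
      exact this
    obtain ⟨m3, hm3⟩ := hmem 0
    obtain ⟨m4, hm4⟩ := hmem 1
    have hinner : (inner ℂ (dftVec N d n 0) (dftVec N d n 1) : ℂ)
        = inner ℂ (dftVec N d n' m3) (dftVec N d n' m4) := by
      rw [← hm3, ← hm4, LinearIsometryEquiv.inner_map_map]
    have hsum := sum_ee_eq_of_inner_eq hd n n' 0 1 m3 m4 hinner
    have hsum1 : ∑ k, ee N (n k) = ∑ k, ee N ((m4 - m3) * n' k) := by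
      simpa using hsum
    have hrange : Set.range n = Set.range (fun k => (m4 - m3) * n' k) :=
      range_eq_of_sum_ee_eq hN _ _ hsum1
    by_cases hb : m4 - m3 = 0
    · -- degenerate case: all n k = 0
      have hn0 : ∀ k, n k = 0 := by
        intro k
        have : n k ∈ Set.range (fun k => (m4 - m3) * n' k) := hrange ▸ Set.mem_range_self k
        obtain ⟨l, hl⟩ := this
        simpa [hb] using hl.symm
      have hmem2 : ∀ m : ZMod N, ∃ m'', dftVec N d n m'' = U (dftVec N d n' m) := by
        intro m
        have : U (dftVec N d n' m) ∈ Set.range (dftVec N d n) := by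
          rw [hU]; exact ⟨m, rfl⟩
        exact this
      obtain ⟨m5, hm5⟩ := hmem2 0
      obtain ⟨m6, hm6⟩ := hmem2 1
      have hinner2 : (inner ℂ (dftVec N d n' 0) (dftVec N d n' 1) : ℂ)
          = inner ℂ (dftVec N d n m5) (dftVec N d n m6) := by
        rw [hm5, hm6, LinearIsometryEquiv.inner_map_map]
      have hsum2 := sum_ee_eq_of_inner_eq hd n' n 0 1 m5 m6 hinner2
      have hsum2' : ∑ k, ee N (n' k) = ∑ k, ee N ((m6 - m5) * n k) := by
        simpa using hsum2
      have hrange2 : Set.range n' = Set.range (fun k => (m6 - m5) * n k) :=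
        range_eq_of_sum_ee_eq hN _ _ hsum2'
      have hn'0 : ∀ k, n' k = 0 := by
        intro k
        have : n' k ∈ Set.range (fun k => (m6 - m5) * n k) := hrange2 ▸ Set.mem_range_self k
        obtain ⟨l, hl⟩ := this
        simpa [hn0 l] using hl.symm
      refine ⟨1, ?_⟩
      have hnn' : n = n' := funext fun k => (hn0 k).trans (hn'0 k).symm
      simp [hnn']
    · refine ⟨(Units.mk0 (m4 - m3) hb)⁻¹, ?_⟩
      ext x
      simp only [Set.mem_image, Set.mem_range]
      constructor
      · rintro ⟨y, ⟨k, hk⟩, hxy⟩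
        have : y ∈ Set.range (fun k => (m4 - m3) * n' k) := hrange ▸ ⟨k, hk⟩
        obtain ⟨l, hl⟩ := this
        refine ⟨l, ?_⟩
        rw [← hxy, ← hl]
        show n' l = ((Units.mk0 (m4 - m3) hb)⁻¹ : (ZMod N)ˣ) * ((m4 - m3) * n' l)
        rw [Units.val_inv_eq_inv_val, Units.val_mk0, inv_mul_cancel_left₀ hb]
      · rintro ⟨l, hl⟩
        refine ⟨(m4 - m3) * n' l, ?_, ?_⟩
        · have : (m4 - m3) * n' l ∈ Set.range (fun k => (m4 - m3) * n' k) := ⟨l, rfl⟩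
          rw [← hrange] at this; exact this
        · rw [Units.val_inv_eq_inv_val, Units.val_mk0, inv_mul_cancel_left₀ hb, hl]
  · rintro ⟨u, hu⟩
    classical
    have hmem : ∀ k, ∃ l, n' l = (u : ZMod N) * n k := by
      intro k
      have : (u : ZMod N) * n k ∈ (fun x => (u : ZMod N) * x) '' Set.range n :=
        ⟨n k, ⟨k, rfl⟩, rfl⟩
      rw [hu] at this
      exact this
    choose g hg using hmem
    have hginj : Function.Injective g := by
      intro k k' hk
      apply hn
      have h1 : (u : ZMod N) * n k = (u : ZMod N) * n k' := by
        rw [← hg k, ← hg k', hk]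
      exact mul_left_cancel₀ (Units.ne_zero u) h1
    have hgbij : Function.Bijective g := Finite.injective_iff_bijective.mp hginj
    set σ : Fin d ≃ Fin d := Equiv.ofBijective g hgbij with hσ
    refine ⟨LinearIsometryEquiv.piLpCongrLeft 2 ℂ ℂ σ.symm, ?_⟩
    have key : ∀ m, LinearIsometryEquiv.piLpCongrLeft 2 ℂ ℂ σ.symm (dftVec N d n' m)
        = dftVec N d n (m * u) := by
      intro m
      refine PiLp.ext fun k => ?_
      have happ : LinearIsometryEquiv.piLpCongrLeft 2 ℂ ℂ σ.symm (dftVec N d n' m) k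
          = (dftVec N d n' m) (σ k) := by
        rfl
      rw [happ]
      have harg : m * n' (σ k) = (m * (u : ZMod N)) * n k := by
        have h1 : σ k = g k := rfl
        rw [h1, hg k]
        ring
      show ((1 / Real.sqrt d : ℝ) : ℂ) * _ ^ (m * n' (σ k)).val
          = ((1 / Real.sqrt d : ℝ) : ℂ) * _ ^ ((m * (u : ZMod N)) * n k).val
      rw [harg]
    have hfun : (fun m => LinearIsometryEquiv.piLpCongrLeft 2 ℂ ℂ σ.symm (dftVec N d n' m))
        = fun m => dftVec N d n (m * (u : ZMod N)) := funext key
    rw [hfun]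
    have hsurj : Function.Surjective (fun m : ZMod N => m * (u : ZMod N)) := by
      intro y
      exact ⟨y * ((u⁻¹ : (ZMod N)ˣ) : ZMod N), Units.inv_mul_cancel_right y u⟩
    exact (Function.Surjective.range_comp hsurj (dftVec N d n)).symm
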